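/- Let E be a URI-set with elements N_1 = 1 < N_2 < .... Then for all k ≥ 2 and n ≥ k, P(N_k = n) = (1/(n(n−1))) · ∑ 1/(j_2 j_3 ⋯ j_{k−1}), where the sum ranges over all integer tuples 1 ≤ j_2 < j_3 < ... < j_{k−1} ≤ n−2 (with the convention that the empty sum/product for k = 2 gives P(N_2 = n) = 1/(n(n−1))). -/

import Mathlib

open MeasureTheory ProbabilityTheory Finset

open scoped Classical in
lemma nth_eq_iff_count {p : ℕ → Prop} {i n : ℕ} (hn : n ≠ 0) :
    Nat.nth p i = n ↔ p n ∧ Nat.count p n = i := by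
  constructor
  · intro h
    by_cases h' : ∀ hf : (setOf p).Finite, i < hf.toFinset.card
    · exact ⟨h ▸ Nat.nth_mem i h', by rw [← h, Nat.count_nth h']⟩
    · push_neg at h'
      obtain ⟨hf, hcard⟩ := h'
      exact absurd (h ▸ Nat.nth_eq_zero.2 (Or.inr ⟨hf, hcard⟩)) hn
  · rintro ⟨hpn, rfl⟩
    exact Nat.nth_count hpn

lemma prod_telescope : ∀ n : ℕ, 2 ≤ n →
    ∏ i ∈ Finset.Ico 2 n, (((i : ℝ) - 1) / i) = 1 / ((n : ℝ) - 1) := by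
  intro n
  induction n with
  | zero => omega
  | succ m ih =>
    intro hm
    rcases Nat.lt_or_ge m 2 with h | h
    · interval_cases m
      · omega
      · simp [show Finset.Ico 2 2 = (∅ : Finset ℕ) from rfl]
        norm_num
    · rw [Finset.prod_Ico_succ_top (by omega), ih h]
      have h1 : (m : ℝ) - 1 ≠ 0 := by
        have : (2:ℝ) ≤ m := by exact_mod_cast h
        nlinarith
      have h2 : (m : ℝ) ≠ 0 := by
        have : (2:ℝ) ≤ m := by exact_mod_cast h
        nlinarith
      push_cast
      field_simp
      rw [add_sub_cancel_right, div_self h2]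

/-- For a URI-set with ordered elements `N_1 = 1 < N_2 < …`, for `k ≥ 2` and `n ≥ k`:
`P(N_k = n) = (1/(n(n-1))) ∑ 1/(j_2 ⋯ j_{k-1})`, the sum being over all tuples
`1 ≤ j_2 < … < j_{k-1} ≤ n-2` (i.e. over subsets of `{1,…,n-2}` of size `k-2`). -/
theorem stmt14 {Ω : Type*} [MeasurableSpace Ω] (μ : Measure Ω) [IsProbabilityMeasure μ]
    (E : ℕ → Set Ω) (hmeas : ∀ n, MeasurableSet (E n))
    (hind : iIndepSet E μ)
    (hprob : ∀ n : ℕ, 1 ≤ n → μ (E n) = 1 / n)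
    (hzero : E 0 = ∅)
    (k n : ℕ) (hk : 2 ≤ k) (hkn : k ≤ n) :
    (μ {ω | Nat.nth (fun m => ω ∈ E m) (k - 1) = n}).toReal
      = (1 / ((n : ℝ) * ((n : ℝ) - 1)))
        * ∑ s ∈ (Finset.Icc 1 (n - 2)).powersetCard (k - 2),
            1 / ∏ j ∈ s, (j : ℝ) := by
  classical
  have h2n : 2 ≤ n := hk.trans hkn
  have hne : n ≠ 0 := by omega
  set A := (Finset.range n).powersetCard (k - 1) with hA
  set f : Finset ℕ → ℕ → Set Ω :=
    fun S i => if i = n then E n else if i ∈ S then E i else (E i)ᶜ with hf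
  have hfilter : ∀ S ∈ A, ∀ ω ∈ ⋂ i ∈ Finset.range (n+1), f S i,
      (Finset.range n).filter (fun m => ω ∈ E m) = S ∧ ω ∈ E n := by
    intro S hS ω hω
    simp only [Set.mem_iInter] at hω
    rw [hA, Finset.mem_powersetCard] at hS
    constructor
    · ext i
      simp only [Finset.mem_filter, Finset.mem_range]
      constructor
      · rintro ⟨hi, hEi⟩
        have h := hω i (Finset.mem_range.2 (by omega))
        by_contra hiS
        simp only [hf, if_neg (by omega : ¬ i = n), if_neg hiS, Set.mem_compl_iff] at h
        exact h hEi
      · intro hiS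
        have hi : i < n := Finset.mem_range.1 (hS.1 hiS)
        have h := hω i (Finset.mem_range.2 (by omega))
        simp only [hf, if_neg (by omega : ¬ i = n), if_pos hiS] at h
        exact ⟨hi, h⟩
    · have h := hω n (Finset.mem_range.2 (by omega))
      simpa [hf] using h
  have hset : {ω | Nat.nth (fun m => ω ∈ E m) (k - 1) = n}
      = ⋃ S ∈ A, ⋂ i ∈ Finset.range (n+1), f S i := by
    ext ω
    simp only [Set.mem_setOf_eq, nth_eq_iff_count hne, Set.mem_iUnion]
    constructor
    · rintro ⟨hpn, hcount⟩
      rw [Nat.count_eq_card_filter_range] at hcount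
      refine ⟨(Finset.range n).filter (fun m => ω ∈ E m), ?_, ?_⟩
      · rw [hA, Finset.mem_powersetCard]
        exact ⟨Finset.filter_subset _ _, hcount⟩
      · simp only [Set.mem_iInter]
        intro i hi
        rw [hf]
        dsimp only
        split_ifs with h1 h2
        · exact h1 ▸ hpn
        · exact (Finset.mem_filter.1 h2).2
        · intro hEi
          have hi' : i < n := by
            have := Finset.mem_range.1 hi; omega
          exact h2 (Finset.mem_filter.2 ⟨Finset.mem_range.2 hi', hEi⟩)
    · rintro ⟨S, hS, hω⟩
      obtain ⟨hfil, hEn⟩ := hfilter S hS ω hω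
      refine ⟨hEn, ?_⟩
      rw [Nat.count_eq_card_filter_range, hfil]
      exact (Finset.mem_powersetCard.1 hS).2
  have hmeasble : ∀ S ∈ A, MeasurableSet (⋂ i ∈ Finset.range (n+1), f S i) := by
    intro S _
    refine MeasurableSet.biInter (Finset.range (n+1)).countable_toSet (fun i _ => ?_)
    rw [hf]; dsimp only
    split_ifs
    exacts [hmeas n, hmeas i, (hmeas i).compl]
  have hdisj : (A : Set (Finset ℕ)).PairwiseDisjoint
      (fun S => ⋂ i ∈ Finset.range (n+1), f S i) := by
    intro S hS T hT hST
    refine Set.disjoint_left.2 fun ω hωS hωT => hST ?_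
    rw [← (hfilter S hS ω hωS).1, (hfilter T hT ω hωT).1]
  have hSmeas : ∀ S : Finset ℕ, μ (⋂ i ∈ Finset.range (n+1), f S i)
      = ∏ i ∈ Finset.range (n+1), μ (f S i) := by
    intro S
    refine (iIndepSet_iff E μ).1 hind _ (fun i _ => ?_)
    rw [hf]; dsimp only
    split_ifs with h1 h2
    · subst h1; exact MeasurableSpace.measurableSet_generateFrom rfl
    · exact MeasurableSpace.measurableSet_generateFrom rfl
    · exact (MeasurableSpace.measurableSet_generateFrom (Set.mem_singleton (E i))).compl
  have hval : ∀ i : ℕ, (μ (E i)).toReal = 1 / (i : ℝ) := by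
    intro i
    rcases Nat.eq_zero_or_pos i with rfl | hi
    · simp [hzero]
    · rw [hprob i hi, ENNReal.toReal_div]
      simp
  have hvalc : ∀ i : ℕ, (μ (E i)ᶜ).toReal = 1 - 1 / (i : ℝ) := by
    intro i
    rw [measure_compl (hmeas i) (measure_ne_top μ _), measure_univ,
      ENNReal.toReal_sub_of_le prob_le_one ENNReal.one_ne_top, ENNReal.toReal_one, hval]
  have hterm : ∀ S ∈ A, (μ (⋂ i ∈ Finset.range (n+1), f S i)).toReal
      = (1/(n:ℝ)) * ∏ i ∈ Finset.range n,
          (if i ∈ S then 1/(i:ℝ) else 1 - 1/(i:ℝ)) := by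
    intro S hS
    rw [hSmeas S, ENNReal.toReal_prod, Finset.prod_range_succ, mul_comm]
    congr 1
    · rw [hf]; dsimp only
      rw [if_pos rfl]
      exact hval n
    · refine Finset.prod_congr rfl (fun i hi => ?_)
      have hin : ¬ i = n := by have := Finset.mem_range.1 hi; omega
      rw [hf]; dsimp only
      rw [if_neg hin]
      split_ifs with h
      · exact hval i
      · exact hvalc i
  rw [hset, measure_biUnion_finset hdisj hmeasble,
    ENNReal.toReal_sum (fun S _ => measure_ne_top μ _),
    Finset.sum_congr rfl hterm, ← Finset.mul_sum]
  have key : ∑ S ∈ A, ∏ i ∈ Finset.range n, (if i ∈ S then 1/(i:ℝ) else 1 - 1/(i:ℝ))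
      = (1/((n:ℝ)-1)) * ∑ s ∈ (Finset.Icc 1 (n-2)).powersetCard (k-2),
          1 / ∏ j ∈ s, (j:ℝ) := by
    have hvanish : ∀ S ∈ A,
        (∏ i ∈ Finset.range n, (if i ∈ S then 1/(i:ℝ) else 1 - 1/(i:ℝ))) ≠ 0
        → (1 ∈ S ∧ 0 ∉ S) := by
      intro S hS h
      by_contra hc
      push_neg at hc
      by_cases h1 : 1 ∈ S
      · have h0 : 0 ∈ S := hc h1
        exact h (Finset.prod_eq_zero (Finset.mem_range.2 (by omega : (0:ℕ) < n))
          (by simp [h0]))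
      · exact h (Finset.prod_eq_zero (Finset.mem_range.2 (by omega : 1 < n))
          (by simp [h1]))
    rw [← Finset.sum_filter_of_ne hvanish]
    -- bijection to subsets of Ico 2 n
    have step2 : ∑ S ∈ A.filter (fun S => 1 ∈ S ∧ 0 ∉ S),
          ∏ i ∈ Finset.range n, (if i ∈ S then 1/(i:ℝ) else 1 - 1/(i:ℝ))
        = ∑ T ∈ (Finset.Ico 2 n).powersetCard (k-2),
            (1/((n:ℝ)-1)) * ∏ i ∈ T, (1/((i:ℝ)-1)) := by
      refine Finset.sum_nbij' (fun S => S.erase 1) (fun T => insert 1 T) ?_ ?_ ?_ ?_ ?_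
      · intro S hS
        simp only [Finset.mem_filter, hA, Finset.mem_powersetCard] at hS
        obtain ⟨⟨hsub, hcard⟩, h1S, h0S⟩ := hS
        rw [Finset.mem_powersetCard]
        constructor
        · intro i hi
          rw [Finset.mem_erase] at hi
          have := Finset.mem_range.1 (hsub hi.2)
          have : i ≠ 0 := fun h => h0S (h ▸ hi.2)
          rw [Finset.mem_Ico]
          omega
        · rw [Finset.card_erase_of_mem h1S, hcard]
          omega
      · intro T hT
        rw [Finset.mem_powersetCard] at hT
        obtain ⟨hsub, hcard⟩ := hT
        have h1T : 1 ∉ T := fun h => by have := Finset.mem_Ico.1 (hsub h); omega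
        simp only [Finset.mem_filter, hA, Finset.mem_powersetCard]
        refine ⟨⟨?_, ?_⟩, Finset.mem_insert_self _ _, ?_⟩
        · intro i hi
          rcases Finset.mem_insert.1 hi with rfl | hi
          · exact Finset.mem_range.2 (by omega)
          · have := Finset.mem_Ico.1 (hsub hi)
            exact Finset.mem_range.2 (by omega)
        · rw [Finset.card_insert_of_notMem h1T, hcard]; omega
        · intro h0
          rcases Finset.mem_insert.1 h0 with h | h
          · omega
          · have := Finset.mem_Ico.1 (hsub h); omega
      · intro S hS
        simp only [Finset.mem_filter] at hS
        exact Finset.insert_erase hS.2.1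
      · intro T hT
        rw [Finset.mem_powersetCard] at hT
        have h1T : 1 ∉ T := fun h => by have := Finset.mem_Ico.1 (hT.1 h); omega
        exact Finset.erase_insert h1T
      · intro S hS
        simp only [Finset.mem_filter, hA, Finset.mem_powersetCard] at hS
        obtain ⟨⟨hsub, hcard⟩, h1S, h0S⟩ := hS
        -- split range n = {0,1} ∪ Ico 2 n
        have hsplit : ∏ i ∈ Finset.range n, (if i ∈ S then 1/(i:ℝ) else 1 - 1/(i:ℝ))
            = ∏ i ∈ Finset.Ico 2 n, (if i ∈ S then 1/(i:ℝ) else 1 - 1/(i:ℝ)) := by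
          rw [Finset.range_eq_Ico, ← Finset.prod_Ico_consecutive _ (Nat.zero_le 2) h2n]
          have h01 : Finset.Ico 0 2 = ({0, 1} : Finset ℕ) := rfl
          rw [h01, Finset.prod_pair (by omega)]
          rw [if_neg h0S, if_pos h1S]
          norm_num
        rw [hsplit]
        have hprod : ∏ i ∈ Finset.Ico 2 n, (if i ∈ S then 1/(i:ℝ) else 1 - 1/(i:ℝ))
            = ∏ i ∈ Finset.Ico 2 n,
                ((((i:ℝ)-1)/i) * (if i ∈ S.erase 1 then 1/((i:ℝ)-1) else 1)) := by
          refine Finset.prod_congr rfl (fun i hi => ?_)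
          have hi2 := Finset.mem_Ico.1 hi
          have hine : i ≠ 1 := by omega
          have hi0 : (i:ℝ) ≠ 0 := by
            have : (2:ℝ) ≤ i := by exact_mod_cast hi2.1
            nlinarith
          have hi1 : (i:ℝ) - 1 ≠ 0 := by
            have : (2:ℝ) ≤ i := by exact_mod_cast hi2.1
            nlinarith
          by_cases hiS : i ∈ S
          · rw [if_pos hiS, if_pos (Finset.mem_erase.2 ⟨hine, hiS⟩)]
            field_simp
          · rw [if_neg hiS, if_neg (fun h => hiS (Finset.mem_erase.1 h).2)]
            field_simp
        rw [hprod, Finset.prod_mul_distrib, prod_telescope n h2n, Finset.prod_ite_mem,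
          Finset.inter_eq_right.2 ?_]
        intro i hi
        rw [Finset.mem_erase] at hi
        have := Finset.mem_range.1 (hsub hi.2)
        have : i ≠ 0 := fun h => h0S (h ▸ hi.2)
        rw [Finset.mem_Ico]; omega
    rw [step2, ← Finset.mul_sum]
    congr 1
    -- reindex by i ↦ i - 1
    refine Finset.sum_nbij' (fun T => T.image (· - 1)) (fun s => s.image (· + 1))
      ?_ ?_ ?_ ?_ ?_
    · intro T hT
      rw [Finset.mem_powersetCard] at hT ⊢
      constructor
      · intro j hj
        obtain ⟨i, hi, rfl⟩ := Finset.mem_image.1 hj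
        have := Finset.mem_Ico.1 (hT.1 hi)
        rw [Finset.mem_Icc]; omega
      · rw [Finset.card_image_of_injOn, hT.2]
        intro a ha b hb hab
        simp only at hab
        have h1 := Finset.mem_Ico.1 (hT.1 ha)
        have h2 := Finset.mem_Ico.1 (hT.1 hb)
        omega
    · intro s hs
      rw [Finset.mem_powersetCard] at hs ⊢
      constructor
      · intro j hj
        obtain ⟨i, hi, rfl⟩ := Finset.mem_image.1 hj
        have := Finset.mem_Icc.1 (hs.1 hi)
        rw [Finset.mem_Ico]; omega
      · rw [Finset.card_image_of_injOn (fun a _ b _ hab => by omega), hs.2]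
    · intro T hT
      rw [Finset.mem_powersetCard] at hT
      show (T.image (fun x => x - 1)).image (fun x => x + 1) = T
      rw [Finset.image_image]
      have heq : ∀ i ∈ T, ((fun x => x + 1) ∘ (fun x => x - 1)) i = id i := by
        intro i hi
        have := Finset.mem_Ico.1 (hT.1 hi)
        simp only [Function.comp_apply, id_eq]
        omega
      rw [Finset.image_congr heq, Finset.image_id]
    · intro s hs
      rw [Finset.mem_powersetCard] at hs
      show (s.image (fun x => x + 1)).image (fun x => x - 1) = s
      rw [Finset.image_image]
      have heq : ∀ j ∈ s, ((fun x => x - 1) ∘ (fun x => x + 1)) j = id j := by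
        intro j _
        simp only [Function.comp_apply, id_eq]
        omega
      rw [Finset.image_congr heq, Finset.image_id]
    · intro T hT
      rw [Finset.mem_powersetCard] at hT
      show ∏ i ∈ T, 1 / ((i:ℝ) - 1)
          = 1 / ∏ j ∈ T.image (fun x : ℕ => x - 1), ((j : ℕ) : ℝ)
      rw [Finset.prod_image (fun a ha b hb hab => by
        have h1 := Finset.mem_Ico.1 (hT.1 ha)
        have h2 := Finset.mem_Ico.1 (hT.1 hb)
        omega)]
      rw [one_div, ← Finset.prod_inv_distrib]
      refine Finset.prod_congr rfl (fun i hi => ?_)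
      have hi2 := Finset.mem_Ico.1 (hT.1 hi)
      rw [one_div]
      congr 1
      rw [Nat.cast_sub (by omega : 1 ≤ i), Nat.cast_one]
  have hn0 : (n:ℝ) ≠ 0 := Nat.cast_ne_zero.2 hne
  have hn1 : (n:ℝ) - 1 ≠ 0 := by
    have : (2:ℝ) ≤ n := by exact_mod_cast h2n
    nlinarith
  rw [key, ← mul_assoc]
  congr 1
  field_simp
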